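/- Along the compressive branch, the shock speed s(ρ) = (ρ u(ρ) − ρ_r u_r)/(ρ − ρ_r) is strictly increasing in ρ on (ρ_r, η ρ_r); indeed ds/dρ = (1/(ρ − ρ_r)) · ( d(ρu)/dρ − (ρ u(ρ) − ρ_r u_r)/(ρ − ρ_r) ) > 0 for all ρ ∈ (ρ_r, η ρ_r). -/

import Mathlib

open Real Set

theorem stmt5 (γ ρr ur pr η cr : ℝ)
    (hγ : 1 < γ) (hρr : 0 < ρr) (hpr : 0 < pr)
    (hη : η = (γ + 1) / (γ - 1))
    (hcr : cr = Real.sqrt (γ * pr / ρr))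
    (u s : ℝ → ℝ)
    (hu : ∀ ρ, u ρ = ur + cr * Real.sqrt (2 / (γ - 1)) * (ρ - ρr)
        / Real.sqrt ((η * ρr - ρ) * ρ))
    (hs : ∀ ρ, s ρ = (ρ * u ρ - ρr * ur) / (ρ - ρr)) :
    StrictMonoOn s (Set.Ioo ρr (η * ρr))
    ∧ ∀ ρ ∈ Set.Ioo ρr (η * ρr),
        HasDerivAt s
          ((1 / (ρ - ρr))
            * (deriv (fun x => x * u x) ρ - (ρ * u ρ - ρr * ur) / (ρ - ρr))) ρ
        ∧ 0 < (1 / (ρ - ρr))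
            * (deriv (fun x => x * u x) ρ - (ρ * u ρ - ρr * ur) / (ρ - ρr)) := by
  set A := η * ρr with hA
  set K := cr * Real.sqrt (2 / (γ - 1)) with hK
  have hγ1 : (0:ℝ) < γ - 1 := by linarith
  have hcr0 : 0 < cr := by
    rw [hcr]; exact Real.sqrt_pos.mpr (div_pos (mul_pos (by linarith) hpr) hρr)
  have hK0 : 0 < K := mul_pos hcr0 (Real.sqrt_pos.mpr (div_pos two_pos hγ1))
  have key : ∀ ρ ∈ Set.Ioo ρr A,
      HasDerivAt s ((1 / (ρ - ρr)) * (deriv (fun x => x * u x) ρ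
        - (ρ * u ρ - ρr * ur) / (ρ - ρr))) ρ
      ∧ 0 < (1 / (ρ - ρr)) * (deriv (fun x => x * u x) ρ
        - (ρ * u ρ - ρr * ur) / (ρ - ρr)) := by
    intro ρ hρmem
    obtain ⟨h1, h2⟩ := hρmem
    have hρ0 : 0 < ρ := lt_trans hρr h1
    have hAρ : 0 < A - ρ := sub_pos.mpr h2
    have hρρr : ρ - ρr ≠ 0 := ne_of_gt (sub_pos.mpr h1)
    set s1 := Real.sqrt ρ with hs1
    set s2 := Real.sqrt (A - ρ) with hs2
    have hs10 : 0 < s1 := Real.sqrt_pos.mpr hρ0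
    have hs20 : 0 < s2 := Real.sqrt_pos.mpr hAρ
    -- differentiability of x * u x
    have hinner : HasDerivAt (fun x : ℝ => (A - x) * x) (A - 2 * ρ) ρ := by
      have h : HasDerivAt (fun x : ℝ => (A - x) * x) (-1 * ρ + (A - ρ) * 1) ρ :=
        ((hasDerivAt_id' ρ).const_sub A).mul (hasDerivAt_id' ρ)
      convert h using 1
      ring
    have hval : (A - ρ) * ρ ≠ 0 := ne_of_gt (mul_pos hAρ hρ0)
    have hsqrtg : HasDerivAt (fun x => Real.sqrt ((A - x) * x))
        ((A - 2 * ρ) / (2 * Real.sqrt ((A - ρ) * ρ))) ρ :=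
      hinner.sqrt hval
    have hsg0 : Real.sqrt ((A - ρ) * ρ) ≠ 0 :=
      ne_of_gt (Real.sqrt_pos.mpr (mul_pos hAρ hρ0))
    have huf : u = fun x => ur + K * (x - ρr) / Real.sqrt ((A - x) * x) := by
      funext x; rw [hu x]
    have hudiff : DifferentiableAt ℝ u ρ := by
      rw [huf]
      exact (((differentiableAt_const K).mul
        (differentiableAt_id.sub_const ρr)).div hsqrtg.differentiableAt hsg0).const_add ur
    have hxu : DifferentiableAt ℝ (fun x => x * u x) ρ :=
      differentiableAt_id.mul hudiff
    set d := deriv (fun x => x * u x) ρ with hd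
    have hdd : HasDerivAt (fun x => x * u x) d ρ := hxu.hasDerivAt
    have hq : HasDerivAt s
        ((d * (ρ - ρr) - (ρ * u ρ - ρr * ur) * 1) / (ρ - ρr) ^ 2) ρ := by
      have hf : HasDerivAt (fun x => x * u x - ρr * ur) d ρ := hdd.sub_const _
      have hg : HasDerivAt (fun x => x - ρr) 1 ρ := (hasDerivAt_id ρ).sub_const _
      have hdiv := hf.div hg hρρr
      have hsfun : s = fun x => (x * u x - ρr * ur) / (x - ρr) := by
        funext x; rw [hs x]
      rw [hsfun]
      exact hdiv
    have hEeq : (d * (ρ - ρr) - (ρ * u ρ - ρr * ur) * 1) / (ρ - ρr) ^ 2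
        = (1 / (ρ - ρr)) * (d - (ρ * u ρ - ρr * ur) / (ρ - ρr)) := by
      field_simp
      try ring
      try exact Or.inl trivial
    have hE : HasDerivAt s
        ((1 / (ρ - ρr)) * (d - (ρ * u ρ - ρr * ur) / (ρ - ρr))) ρ := by
      rw [← hEeq]; exact hq
    refine ⟨hE, ?_⟩
    -- the alternative formula for s and its derivative
    set D := K * ((1 / (2 * s1) * s2 - s1 * (-(1 / (2 * s2)))) / s2 ^ 2) with hD
    have hφ : HasDerivAt (fun x => ur + K * (Real.sqrt x / Real.sqrt (A - x))) D ρ := by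
      have ha : HasDerivAt Real.sqrt (1 / (2 * s1)) ρ := Real.hasDerivAt_sqrt (ne_of_gt hρ0)
      have hb : HasDerivAt (fun x => Real.sqrt (A - x)) (-(1 / (2 * s2))) ρ := by
        have hi : HasDerivAt (fun x : ℝ => A - x) (-1) ρ := by
          simpa using ((hasDerivAt_id ρ).const_sub A)
        have h := hi.sqrt (ne_of_gt hAρ)
        convert h using 1
        rw [← hs2]; ring
      exact ((ha.div hb (ne_of_gt hs20)).const_mul K).const_add ur
    have hseq : Set.EqOn s (fun x => ur + K * (Real.sqrt x / Real.sqrt (A - x)))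
        (Set.Ioo ρr A) := by
      intro x hx
      have hx0 : 0 < x := lt_trans hρr hx.1
      have hAx : 0 < A - x := sub_pos.mpr hx.2
      have hxρr : x - ρr ≠ 0 := ne_of_gt (sub_pos.mpr hx.1)
      have hsq : Real.sqrt ((A - x) * x) = Real.sqrt (A - x) * Real.sqrt x :=
        Real.sqrt_mul hAx.le x
      have hxx : Real.sqrt x * Real.sqrt x = x := Real.mul_self_sqrt hx0.le
      have hsx0 : Real.sqrt x ≠ 0 := ne_of_gt (Real.sqrt_pos.mpr hx0)
      have hsAx0 : Real.sqrt (A - x) ≠ 0 := ne_of_gt (Real.sqrt_pos.mpr hAx)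
      rw [hs x, hu x]
      simp only [← hA, ← hK]
      rw [hsq]
      field_simp
      linear_combination (-1 * K * (x - ρr)) * hxx
    have hsD : HasDerivAt s D ρ :=
      hφ.congr_of_eventuallyEq
        (Filter.eventuallyEq_of_mem (isOpen_Ioo.mem_nhds ⟨h1, h2⟩) hseq)
    have hDeq : (1 / (ρ - ρr)) * (d - (ρ * u ρ - ρr * ur) / (ρ - ρr)) = D :=
      hE.unique hsD
    rw [hDeq, hD]
    have : 0 < (1 / (2 * s1) * s2 - s1 * (-(1 / (2 * s2)))) / s2 ^ 2 := by
      apply div_pos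
      · have : 1 / (2 * s1) * s2 - s1 * (-(1 / (2 * s2)))
            = s2 / (2 * s1) + s1 / (2 * s2) := by ring
        rw [this]
        positivity
      · positivity
    exact mul_pos hK0 this
  refine ⟨?_, key⟩
  apply strictMonoOn_of_deriv_pos (convex_Ioo _ _)
  · intro x hx
    exact ((key x hx).1.continuousAt).continuousWithinAt
  · intro x hx
    rw [interior_Ioo] at hx
    rw [(key x hx).1.deriv]
    exact (key x hx).2
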